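/- arXiv:1803.01153 — 2 statements merged into one kernel-verified Lean document; each statement's English description precedes it below -/
import Mathlib

section
/- Let E = (E_1,…,E_m) and ψ be elements of L²(μ)^m and L²(μ) respectively, let R_1,…,R_m be bounded operators on L²(μ) with adjoints R_jᵗ, and suppose Σ_{j=1}^m R_jᵗ E_j = 0. Set B_j := R_j ψ. Then for every b ∈ L^∞(μ), ∫ (Σ_j E_j B_j) b dμ = Σ_j ∫ ([b, R_j]ψ) E_j dμ, where [b,R_j]f := b·R_j f − R_j(b f). Consequently |∫ (E·B) b dμ| ≤ (Σ_j ‖[b,R_j]‖_{L²→L²}) ‖E‖_{L²} ‖ψ‖_{L²}. -/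
open MeasureTheory
open scoped InnerProductSpace

section Aux

variable {X : Type*} [MeasurableSpace X] {μ : Measure X}

lemma aux_int_mul_eq_inner (f g : Lp ℝ 2 μ) :
    ∫ x, (f : X → ℝ) x * (g : X → ℝ) x ∂μ = ⟪f, g⟫_ℝ := by
  rw [L2.inner_def]
  simp [RCLike.inner_apply, mul_comm]

lemma aux_integrable_mul (f g : Lp ℝ 2 μ) :
    Integrable (fun x => (f : X → ℝ) x * (g : X → ℝ) x) μ := by
  simpa [RCLike.inner_apply] using L2.integrable_inner (𝕜 := ℝ) g f

end Aux

/-- if `E = (E_1,…,E_m)`, `ψ ∈ L²(μ)`, `R_j` are bounded operators on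
`L²(μ)` with adjoints `R_jᵗ`, `Σ_j R_jᵗ E_j = 0`, and `B_j := R_j ψ`, then for every
bounded `b` (acting by multiplication via `Mb`),
`∫ (Σ_j E_j B_j) b dμ = Σ_j ∫ ([b,R_j]ψ) E_j dμ`, and consequently
`|∫ (E·B) b dμ| ≤ (Σ_j ‖[b,R_j]‖) ‖E‖_{L²} ‖ψ‖_{L²}`. -/
theorem div_curl_pairing {X : Type*} [MeasurableSpace X] (μ : Measure X) [SigmaFinite μ]
    {m : ℕ} (E : Fin m → Lp ℝ 2 μ) (ψ : Lp ℝ 2 μ)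
    (R Rt : Fin m → (Lp ℝ 2 μ →L[ℝ] Lp ℝ 2 μ))
    (hadj : ∀ (j : Fin m) (f g : Lp ℝ 2 μ), ⟪R j f, g⟫_ℝ = ⟪f, Rt j g⟫_ℝ)
    (hdiv : ∑ j, Rt j (E j) = 0)
    (b : X → ℝ) (hb : MemLp b ⊤ μ)
    (Mb : Lp ℝ 2 μ →L[ℝ] Lp ℝ 2 μ)
    (hMb : ∀ f : Lp ℝ 2 μ, (Mb f : X → ℝ) =ᵐ[μ] fun x => b x * f x) :
    (∫ x, (∑ j, (E j : X → ℝ) x * (R j ψ : X → ℝ) x) * b x ∂μ)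
        = ∑ j, ∫ x, ((Mb.comp (R j) - (R j).comp Mb) ψ : X → ℝ) x * (E j : X → ℝ) x ∂μ ∧
    |∫ x, (∑ j, (E j : X → ℝ) x * (R j ψ : X → ℝ) x) * b x ∂μ|
        ≤ (∑ j, ‖Mb.comp (R j) - (R j).comp Mb‖) * Real.sqrt (∑ j, ‖E j‖ ^ 2) * ‖ψ‖ := by
  set C : Fin m → (Lp ℝ 2 μ →L[ℝ] Lp ℝ 2 μ) :=
    fun j => Mb.comp (R j) - (R j).comp Mb with hC
  -- a.e. equality of each term with the inner-product integrand
  have hterm : ∀ j : Fin m,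
      (fun x => (E j : X → ℝ) x * (R j ψ : X → ℝ) x * b x)
        =ᵐ[μ] fun x => (Mb (R j ψ) : X → ℝ) x * (E j : X → ℝ) x := by
    intro j
    filter_upwards [hMb (R j ψ)] with x hx
    rw [hx]; ring
  have hint : ∀ j : Fin m,
      Integrable (fun x => (E j : X → ℝ) x * (R j ψ : X → ℝ) x * b x) μ :=
    fun j => (aux_integrable_mul (Mb (R j ψ)) (E j)).congr (hterm j).symm
  -- LHS as a sum of inner products
  have hL : (∫ x, (∑ j, (E j : X → ℝ) x * (R j ψ : X → ℝ) x) * b x ∂μ)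
      = ∑ j, ⟪Mb (R j ψ), E j⟫_ℝ := by
    have h1 : (∫ x, (∑ j, (E j : X → ℝ) x * (R j ψ : X → ℝ) x) * b x ∂μ)
        = ∫ x, ∑ j, (E j : X → ℝ) x * (R j ψ : X → ℝ) x * b x ∂μ := by
      congr 1; funext x; rw [Finset.sum_mul]
    rw [h1, integral_finset_sum _ (fun j _ => hint j)]
    refine Finset.sum_congr rfl fun j _ => ?_
    rw [integral_congr_ae (hterm j), aux_int_mul_eq_inner]
  -- Each commutator integral as inner product
  have hR : ∀ j : Fin m,
      (∫ x, ((C j) ψ : X → ℝ) x * (E j : X → ℝ) x ∂μ) = ⟪(C j) ψ, E j⟫_ℝ :=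
    fun j => aux_int_mul_eq_inner _ _
  have hCj : ∀ j : Fin m, (C j) ψ = Mb (R j ψ) - R j (Mb ψ) := by
    intro j; simp [hC]
  -- divergence-free kills the second term
  have hzero : ∑ j, ⟪R j (Mb ψ), E j⟫_ℝ = 0 := by
    have : ∑ j, ⟪R j (Mb ψ), E j⟫_ℝ = ⟪Mb ψ, ∑ j, Rt j (E j)⟫_ℝ := by
      rw [inner_sum]
      exact Finset.sum_congr rfl fun j _ => hadj j _ _
    rw [this, hdiv, inner_zero_right]
  have heq : (∫ x, (∑ j, (E j : X → ℝ) x * (R j ψ : X → ℝ) x) * b x ∂μ)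
      = ∑ j, ∫ x, ((C j) ψ : X → ℝ) x * (E j : X → ℝ) x ∂μ := by
    rw [hL]
    have : ∑ j, ∫ x, ((C j) ψ : X → ℝ) x * (E j : X → ℝ) x ∂μ
        = ∑ j, (⟪Mb (R j ψ), E j⟫_ℝ - ⟪R j (Mb ψ), E j⟫_ℝ) := by
      refine Finset.sum_congr rfl fun j _ => ?_
      rw [hR j, hCj j, inner_sub_left]
    rw [this, Finset.sum_sub_distrib, hzero, sub_zero]
  refine ⟨heq, ?_⟩
  rw [heq]
  calc |∑ j, ∫ x, ((C j) ψ : X → ℝ) x * (E j : X → ℝ) x ∂μ|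
      ≤ ∑ j, |∫ x, ((C j) ψ : X → ℝ) x * (E j : X → ℝ) x ∂μ| :=
        Finset.abs_sum_le_sum_abs _ _
    _ ≤ ∑ j, ‖C j‖ * Real.sqrt (∑ i, ‖E i‖ ^ 2) * ‖ψ‖ := by
        refine Finset.sum_le_sum fun j _ => ?_
        rw [hR j]
        have h1 : |⟪(C j) ψ, E j⟫_ℝ| ≤ ‖(C j) ψ‖ * ‖E j‖ := abs_real_inner_le_norm _ _
        have h2 : ‖(C j) ψ‖ ≤ ‖C j‖ * ‖ψ‖ := (C j).le_opNorm ψ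
        have h3 : ‖E j‖ ≤ Real.sqrt (∑ i, ‖E i‖ ^ 2) := by
          rw [show ‖E j‖ = Real.sqrt (‖E j‖ ^ 2) from
            (Real.sqrt_sq (norm_nonneg _)).symm]
          exact Real.sqrt_le_sqrt (Finset.single_le_sum
            (fun i _ => sq_nonneg ‖E i‖) (Finset.mem_univ j))
        calc |⟪(C j) ψ, E j⟫_ℝ| ≤ ‖(C j) ψ‖ * ‖E j‖ := h1
          _ ≤ (‖C j‖ * ‖ψ‖) * Real.sqrt (∑ i, ‖E i‖ ^ 2) :=
            mul_le_mul h2 h3 (norm_nonneg _)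
              (mul_nonneg (norm_nonneg _) (norm_nonneg _))
          _ = ‖C j‖ * Real.sqrt (∑ i, ‖E i‖ ^ 2) * ‖ψ‖ := by ring
    _ = (∑ j, ‖C j‖) * Real.sqrt (∑ j, ‖E j‖ ^ 2) * ‖ψ‖ := by
        rw [← Finset.sum_mul, ← Finset.sum_mul]
end

section
/- Let K: G × G → ℝ be a kernel satisfying the homogeneity K(δ_r g_1, δ_r g_2) = r^{-Q} K(g_1, g_2) and left-invariance K(h∘g_1, h∘g_2) = K(g_1, g_2) for all h, and suppose K is continuous on {g_1 ≠ g_2} with K(g̃_0, e) ≠ 0 for some g̃_0 with ρ(g̃_0) = 1. Then there exist ε₀ > 0 and c > 0 such that for all 0 < η ≤ ε₀, every g ∈ G and every r > 0, there exists g_* with ρ(g, g_*) = r (namely g_* = g ∘ δ_r(g̃_0^{-1})) such that |K(g_1, g_2)| ≥ c r^{-Q} for all g_1 ∈ B(g, ηr) and all g_2 ∈ B(g_*, ηr), and K(g_1,g_2) has constant sign on B(g, ηr) × B(g_*, ηr). -/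
/-- lower bound for a homogeneous, left-invariant kernel. If
`K(δ_r g₁, δ_r g₂) = r^{-Q} K(g₁,g₂)`, `K(hg₁,hg₂) = K(g₁,g₂)`, `K` is continuous off
the diagonal and `K(g̃₀, e) ≠ 0` for some `g̃₀` with `ρ(g̃₀) = 1`, then there are
`ε₀ > 0` and `c > 0` such that for all `0 < η ≤ ε₀`, `g ∈ G`, `r > 0`, the point
`g_* = g ∘ δ_r(g̃₀⁻¹)` satisfies `ρ(g, g_*) = r`, `|K(g₁,g₂)| ≥ c r^{-Q}` on
`B(g,ηr) × B(g_*,ηr)`, and `K` has constant sign there. -/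
theorem kernel_lower_bound {G : Type*} [Group G] [TopologicalSpace G] [IsTopologicalGroup G]
    (δ : ℝ → G → G) (ρ : G → ℝ) (Q : ℝ) (hQ : 0 < Q)
    (hδ_mul : ∀ r : ℝ, 0 < r → ∀ g h : G, δ r (g * h) = δ r g * δ r h)
    (hδ_comp : ∀ r s : ℝ, 0 < r → 0 < s → ∀ g : G, δ r (δ s g) = δ (r * s) g)
    (hδ_one : ∀ g : G, δ 1 g = g)
    (hρ_nonneg : ∀ g, 0 ≤ ρ g)
    (hρ_inv : ∀ g, ρ g⁻¹ = ρ g)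
    (hρ_homog : ∀ r : ℝ, 0 < r → ∀ g, ρ (δ r g) = r * ρ g)
    (hρ_zero : ∀ g, ρ g = 0 ↔ g = 1)
    (C : ℝ) (hC : 1 ≤ C) (hρ_quasi : ∀ g h : G, ρ (g * h) ≤ C * (ρ g + ρ h))
    (hρ_cont : Continuous ρ)
    (hbasis : ∀ g : G, ∀ U ∈ nhds g, ∃ s > 0, {h : G | ρ (h⁻¹ * g) < s} ⊆ U)
    (K : G → G → ℝ)
    (hK_homog : ∀ r : ℝ, 0 < r → ∀ g₁ g₂ : G, K (δ r g₁) (δ r g₂) = r ^ (-Q) * K g₁ g₂)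
    (hK_inv : ∀ h g₁ g₂ : G, K (h * g₁) (h * g₂) = K g₁ g₂)
    (hK_cont : ContinuousOn (fun p : G × G => K p.1 p.2) {p : G × G | p.1 ≠ p.2})
    (g₀ : G) (hg₀_norm : ρ g₀ = 1) (hg₀ : K g₀ 1 ≠ 0) :
    ∃ ε₀ > (0 : ℝ), ∃ c > (0 : ℝ), ∀ η : ℝ, 0 < η → η ≤ ε₀ →
      ∀ (g : G) (r : ℝ), 0 < r →
        ∃ gs : G, gs = g * δ r g₀⁻¹ ∧ ρ (gs⁻¹ * g) = r ∧
          (∀ g₁ ∈ {h : G | ρ (h⁻¹ * g) < η * r}, ∀ g₂ ∈ {h : G | ρ (h⁻¹ * gs) < η * r},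
            c * r ^ (-Q) ≤ |K g₁ g₂|) ∧
          ((∀ g₁ ∈ {h : G | ρ (h⁻¹ * g) < η * r}, ∀ g₂ ∈ {h : G | ρ (h⁻¹ * gs) < η * r},
              0 < K g₁ g₂) ∨
           (∀ g₁ ∈ {h : G | ρ (h⁻¹ * g) < η * r}, ∀ g₂ ∈ {h : G | ρ (h⁻¹ * gs) < η * r},
              K g₁ g₂ < 0)) := by
  classical
  set L := K g₀ 1 with hLdef
  have hLne : L ≠ 0 := hg₀
  have habsL : 0 < |L| := abs_pos.mpr hLne
  have hρ1 : ρ (1:G) = 0 := (hρ_zero 1).mpr rfl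
  have hg₀inv : ρ g₀⁻¹ = 1 := by rw [hρ_inv, hg₀_norm]
  have hne : ((1:G), g₀⁻¹) ∈ {p : G × G | p.1 ≠ p.2} := by
    intro h
    simp only at h
    have h2 : ρ g₀⁻¹ = 0 := by rw [← h]; exact hρ1
    rw [hg₀inv] at h2; norm_num at h2
  have hK1 : K 1 g₀⁻¹ = L := by
    have h := hK_inv g₀ 1 g₀⁻¹
    simpa using h.symm
  have hcw : ContinuousWithinAt (fun p : G × G => K p.1 p.2)
      {p : G × G | p.1 ≠ p.2} (1, g₀⁻¹) := hK_cont _ hne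
  have hball : Metric.ball L (|L|/2) ∈ nhds (K (1:G) g₀⁻¹) := by
    rw [hK1]; exact Metric.ball_mem_nhds _ (by positivity)
  have hpre := hcw hball
  rw [Filter.mem_map, mem_nhdsWithin] at hpre
  obtain ⟨O, hOopen, hOmem, hOsub⟩ := hpre
  have hOnhds : O ∈ nhds ((1:G), g₀⁻¹) := hOopen.mem_nhds hOmem
  rw [mem_nhds_prod_iff] at hOnhds
  obtain ⟨U, hU, V, hV, hUV⟩ := hOnhds
  obtain ⟨s₁, hs₁, hs₁sub⟩ := hbasis 1 U hU
  obtain ⟨s₂, hs₂, hs₂sub⟩ := hbasis g₀⁻¹ V hV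
  have hC0 : 0 < C := lt_of_lt_of_le one_pos hC
  refine ⟨min s₁ (min s₂ (1/(2*C))), lt_min hs₁ (lt_min hs₂ (by positivity)),
    |L|/2, by positivity, ?_⟩
  intro η hη hηε g r hr
  have hηs₁ : η ≤ s₁ := hηε.trans (min_le_left _ _)
  have hηs₂ : η ≤ s₂ := hηε.trans ((min_le_right _ _).trans (min_le_left _ _))
  have hηC : η ≤ 1/(2*C) := hηε.trans ((min_le_right _ _).trans (min_le_right _ _))
  have hrne : r ≠ 0 := ne_of_gt hr
  have hrinv : 0 < r⁻¹ := inv_pos.mpr hr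
  -- dilation facts
  have hδ1 : ∀ t : ℝ, 0 < t → δ t (1:G) = 1 := by
    intro t ht
    have h := hδ_mul t ht 1 1
    rw [one_mul] at h
    exact (mul_eq_left.mp h.symm)
  have hδinv : ∀ t : ℝ, 0 < t → ∀ x : G, δ t x⁻¹ = (δ t x)⁻¹ := by
    intro t ht x
    have h := hδ_mul t ht x x⁻¹
    rw [mul_inv_cancel, hδ1 t ht] at h
    exact (eq_inv_of_mul_eq_one_right h.symm)
  have hδδ : ∀ x : G, δ r (δ r⁻¹ x) = x := by
    intro x
    rw [hδ_comp r r⁻¹ hr hrinv, mul_inv_cancel₀ hrne, hδ_one]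
  have hδδ' : ∀ x : G, δ r⁻¹ (δ r x) = x := by
    intro x
    rw [hδ_comp r⁻¹ r hrinv hr, inv_mul_cancel₀ hrne, hδ_one]
  set gs := g * δ r g₀⁻¹ with hgs
  -- the key claim
  have key : ∀ g₁ ∈ {h : G | ρ (h⁻¹ * g) < η * r}, ∀ g₂ ∈ {h : G | ρ (h⁻¹ * gs) < η * r},
      ∃ kv : ℝ, K g₁ g₂ = r ^ (-Q) * kv ∧ |kv - L| < |L|/2 := by
    intro g₁ h₁ g₂ h₂
    simp only [Set.mem_setOf_eq] at h₁ h₂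
    set u := δ r⁻¹ (g⁻¹ * g₁) with hu
    set v := δ r⁻¹ (g⁻¹ * g₂) with hv
    refine ⟨K u v, ?_, ?_⟩
    · have h := hK_homog r hr u v
      rw [hu, hv, hδδ, hδδ, hK_inv] at h
      exact h
    · -- ρ bounds
      have hρu : ρ (u⁻¹ * 1) < η := by
        rw [mul_one, hu, ← hδinv r⁻¹ hrinv, mul_inv_rev, inv_inv,
          hρ_homog r⁻¹ hrinv]
        calc r⁻¹ * ρ (g₁⁻¹ * g) < r⁻¹ * (η * r) :=
              mul_lt_mul_of_pos_left h₁ hrinv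
          _ = η := by field_simp
      have hvinv : v⁻¹ = δ r⁻¹ (g₂⁻¹ * g) := by
        rw [hv, ← hδinv r⁻¹ hrinv, mul_inv_rev, inv_inv]
      have hrhs : δ r⁻¹ (g₂⁻¹ * gs) = δ r⁻¹ (g₂⁻¹ * g) * g₀⁻¹ := by
        rw [hgs, show g₂⁻¹ * (g * δ r g₀⁻¹) = (g₂⁻¹ * g) * δ r g₀⁻¹ from
          (mul_assoc _ _ _).symm, hδ_mul r⁻¹ hrinv (g₂⁻¹ * g) (δ r g₀⁻¹), hδδ']
      have hveq : v⁻¹ * g₀⁻¹ = δ r⁻¹ (g₂⁻¹ * gs) := by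
        rw [hvinv, hrhs]
      have hρv : ρ (v⁻¹ * g₀⁻¹) < η := by
        rw [hveq, hρ_homog r⁻¹ hrinv]
        calc r⁻¹ * ρ (g₂⁻¹ * gs) < r⁻¹ * (η * r) :=
              mul_lt_mul_of_pos_left h₂ hrinv
          _ = η := by field_simp
      -- u ≠ v
      have huv : u ≠ v := by
        intro h
        have hρu' : ρ u < η := by rw [← hρ_inv]; simpa using hρu
        have h1 : ρ g₀⁻¹ ≤ C * (ρ u + ρ (v⁻¹ * g₀⁻¹)) := by
          have := hρ_quasi u (v⁻¹ * g₀⁻¹)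
          rw [h] at this ⊢
          simpa [← mul_assoc] using this
        have h2 : C * (ρ u + ρ (v⁻¹ * g₀⁻¹)) < C * (η + η) := by
          apply mul_lt_mul_of_pos_left _ hC0
          exact add_lt_add hρu' hρv
        have h3 : C * (η + η) ≤ 1 := by
          have : C * (η + η) ≤ C * (1/(2*C) + 1/(2*C)) := by
            apply mul_le_mul_of_nonneg_left _ hC0.le
            exact add_le_add hηC hηC
          calc C * (η + η) ≤ C * (1/(2*C) + 1/(2*C)) := this
            _ = 1 := by field_simp; ring
        rw [hg₀inv] at h1
        linarith
      -- membership
      have hu_mem : u ∈ U := hs₁sub (by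
        simp only [Set.mem_setOf_eq]
        exact lt_of_lt_of_le hρu hηs₁)
      have hv_mem : v ∈ V := hs₂sub (by
        simp only [Set.mem_setOf_eq]
        exact lt_of_lt_of_le hρv hηs₂)
      have hO : (u, v) ∈ O := hUV ⟨hu_mem, hv_mem⟩
      have := hOsub ⟨hO, huv⟩
      simpa [Real.dist_eq] using this
  have hrQ : 0 < r ^ (-Q) := Real.rpow_pos_of_pos hr _
  refine ⟨gs, rfl, ?_, ?_, ?_⟩
  · have heq : gs⁻¹ * g = (δ r g₀⁻¹)⁻¹ := by rw [hgs]; group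
    rw [heq, hρ_inv, hρ_homog r hr, hg₀inv, mul_one]
  · intro g₁ h₁ g₂ h₂
    obtain ⟨kv, heq, hkv⟩ := key g₁ h₁ g₂ h₂
    have habs : |L|/2 ≤ |kv| := by
      have h := abs_sub_abs_le_abs_sub L kv
      rw [abs_sub_comm] at h
      linarith
    rw [heq, abs_mul, abs_of_pos hrQ, mul_comm (|L|/2) (r ^ (-Q))]
    exact mul_le_mul_of_nonneg_left habs hrQ.le
  · rcases hLne.lt_or_gt with hL | hL
    · right
      intro g₁ h₁ g₂ h₂
      obtain ⟨kv, heq, hkv⟩ := key g₁ h₁ g₂ h₂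
      rw [abs_lt, abs_of_neg hL] at hkv
      have : kv < 0 := by linarith [hkv.2]
      rw [heq]
      exact mul_neg_of_pos_of_neg hrQ this
    · left
      intro g₁ h₁ g₂ h₂
      obtain ⟨kv, heq, hkv⟩ := key g₁ h₁ g₂ h₂
      rw [abs_lt, abs_of_pos hL] at hkv
      have : 0 < kv := by linarith [hkv.1]
      rw [heq]
      exact mul_pos hrQ this
end
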